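/- arXiv:1001.0034 — 2 statements merged into one kernel-verified Lean document; each statement's English description precedes it below -/
import Mathlib

section
/- Let r ≥ 1 be an integer, let h be an integer with h ≥ r, let q be a real number with 0 < q < 1, let x > 0 be real, and let s ∈ ℂ. Then the series Σ_{(m_1,…,m_r) ∈ ℕ^r} (-1)^{m_1+⋯+m_r} q^{Σ_{j=1}^r (h-j+1) m_j} [m_1+⋯+m_r+x]_q^{-s} converges absolutely and equals Σ_{m=0}^{∞} binom_q(m+r-1, m) · (-q^{h-r+1})^m [m+x]_q^{-s}, where binom_q(m+r-1, m) := ∏_{i=1}^{m} (1-q^{r-1+i})/(1-q^i) and for a positive real t, t^{-s} := exp(-s·log t). -/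
/-- The `q`-number `[y]_q = (1 - q^y)/(1 - q)`, with a real exponent (rpow). -/
noncomputable def qnum (q y : ℝ) : ℝ := (1 - q ^ y) / (1 - q)

/-- The Gaussian (q-binomial) coefficient
`binom_q(m + r - 1, m) = ∏_{i=1}^{m} (1 - q^{r-1+i}) / (1 - q^i)`. -/
noncomputable def gaussBinom (q : ℝ) (r m : ℕ) : ℝ :=
  ∏ i ∈ Finset.range m, (1 - q ^ (r - 1 + (i + 1))) / (1 - q ^ (i + 1))

open Finset

section Aux

variable {q : ℝ} {r n : ℕ}

private lemma aux_ne (hq0 : 0 < q) (hq1 : q < 1) (k : ℕ) : 1 - q ^ (k + 1) ≠ 0 := by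
  have h := pow_lt_one₀ hq0.le hq1 (Nat.succ_ne_zero k)
  simp only [Nat.succ_eq_add_one] at h
  intro hc; linarith

private lemma aux_prod_ne (hq0 : 0 < q) (hq1 : q < 1) (m : ℕ) :
    (∏ i ∈ range m, (1 - q ^ (i + 1))) ≠ 0 :=
  Finset.prod_ne_zero_iff.2 fun i _ => aux_ne hq0 hq1 i

private lemma gaussBinom_alt (hr : 1 ≤ r) (m : ℕ) : gaussBinom q r m =
    (∏ i ∈ range m, (1 - q ^ (r + i))) / ∏ i ∈ range m, (1 - q ^ (i + 1)) := by
  rw [gaussBinom, Finset.prod_div_distrib]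
  congr 1
  refine Finset.prod_congr rfl fun i _ => ?_
  congr 2
  omega

private lemma gaussBinom_succ (hr : 1 ≤ r) (n : ℕ) : gaussBinom q r (n + 1) =
    gaussBinom q r n * ((1 - q ^ (r + n)) / (1 - q ^ (n + 1))) := by
  rw [gaussBinom_alt hr, gaussBinom_alt hr, prod_range_succ, prod_range_succ]
  rw [div_mul_div_comm, mul_div_assoc]

private lemma gaussBinom_shift (hq0 : 0 < q) (hq1 : q < 1) (hr : 1 ≤ r) (n : ℕ) :
    gaussBinom q r (n + 1) * (1 - q ^ (n + 1)) = (1 - q ^ r) * gaussBinom q (r + 1) n := by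
  rw [gaussBinom_alt hr, gaussBinom_alt (by omega : 1 ≤ r + 1)]
  rw [prod_range_succ' (fun i => 1 - q ^ (r + i)) n, prod_range_succ]
  have e1 : ∏ i ∈ range n, (1 - q ^ (r + (i + 1))) = ∏ i ∈ range n, (1 - q ^ (r + 1 + i)) :=
    Finset.prod_congr rfl fun i _ => by rw [show r + (i + 1) = r + 1 + i by omega]
  rw [e1]
  have h1 := aux_prod_ne hq0 hq1 n
  have h2 := aux_ne hq0 hq1 n
  field_simp
  ring

private lemma gaussBinom_pascal (hq0 : 0 < q) (hq1 : q < 1) (hr : 1 ≤ r) (n : ℕ) :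
    gaussBinom q (r + 1) (n + 1) =
      gaussBinom q r (n + 1) + q ^ r * gaussBinom q (r + 1) n := by
  have hs := gaussBinom_shift hq0 hq1 hr n
  have hd := aux_ne hq0 hq1 n
  rw [gaussBinom_succ (by omega : 1 ≤ r + 1) n]
  have hrn : r + 1 + n = r + (n + 1) := by omega
  rw [hrn]
  have : gaussBinom q r (n + 1) = (1 - q ^ r) * gaussBinom q (r + 1) n / (1 - q ^ (n + 1)) := by
    field_simp [← hs]
    exact hs
  rw [this]
  field_simp
  ring

private lemma gaussBinom_conv (hq0 : 0 < q) (hq1 : q < 1) (hr : 1 ≤ r) (n : ℕ) :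
    gaussBinom q (r + 1) n = ∑ p ∈ Finset.HasAntidiagonal.antidiagonal n, q ^ (r * p.1) * gaussBinom q r p.2 := by
  induction n with
  | zero => simp [gaussBinom]
  | succ n ih =>
    rw [Finset.Nat.sum_antidiagonal_succ, gaussBinom_pascal hq0 hq1 hr n, ih]
    rw [Finset.mul_sum]
    simp only [mul_zero, pow_zero, one_mul]
    congr 1
    refine Finset.sum_congr rfl fun p _ => ?_
    rw [show r * (p.1 + 1) = r + r * p.1 by ring, pow_add]
    ring

private lemma sum_finAntidiagonal_succ {M : Type*} [AddCommMonoid M] (d n : ℕ)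
    (f : (Fin (d + 1) → ℕ) → M) :
    ∑ x ∈ Finset.finAntidiagonal (d + 1) n, f x =
      ∑ p ∈ Finset.HasAntidiagonal.antidiagonal n, ∑ x ∈ Finset.finAntidiagonal d p.2, f (Fin.cons p.1 x) := by
  rw [← Finset.sum_sigma (Finset.HasAntidiagonal.antidiagonal n) (fun p => Finset.finAntidiagonal d p.2)
    (fun z => f (Fin.cons z.1.1 z.2))]
  refine Finset.sum_nbij'
    (i := fun (x : Fin (d + 1) → ℕ) => ⟨(x 0, ∑ j, x (Fin.succ j)), Fin.tail x⟩)
    (j := fun (z : (_ : ℕ × ℕ) × (Fin d → ℕ)) => Fin.cons z.1.1 z.2) ?_ ?_ ?_ ?_ ?_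
  · intro x hx
    simp only [Finset.mem_finAntidiagonal, Fin.sum_univ_succ] at hx
    simp only [Finset.mem_sigma, Finset.HasAntidiagonal.mem_antidiagonal, Finset.mem_finAntidiagonal]
    exact ⟨hx, rfl⟩
  · intro z hz
    simp only [Finset.mem_sigma, Finset.HasAntidiagonal.mem_antidiagonal, Finset.mem_finAntidiagonal] at hz
    simp only [Finset.mem_finAntidiagonal, Fin.sum_univ_succ, Fin.cons_zero, Fin.cons_succ]
    rw [hz.2]
    exact hz.1
  · intro x _
    exact Fin.cons_self_tail x
  · rintro ⟨⟨a, b⟩, g⟩ hz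
    simp only [Finset.mem_sigma, Finset.HasAntidiagonal.mem_antidiagonal, Finset.mem_finAntidiagonal] at hz
    simp [Fin.tail_cons, hz.2]
  · intro x _
    rw [Fin.cons_self_tail]

private lemma finAntidiagonal_one (n : ℕ) :
    Finset.finAntidiagonal 1 n = {fun _ : Fin 1 => n} := by
  ext f
  simp only [Finset.mem_finAntidiagonal, Fin.sum_univ_one, Finset.mem_singleton]
  constructor
  · intro hf
    funext i
    rw [Fin.eq_zero i, hf]
  · intro hf; rw [hf]

private lemma keyComb (hq0 : 0 < q) (hq1 : q < 1) (hr : 1 ≤ r) (n : ℕ) :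
    ∑ m ∈ Finset.finAntidiagonal r n, q ^ (∑ j : Fin r, (r - 1 - (j : ℕ)) * m j) =
      gaussBinom q r n := by
  induction r, hr using Nat.le_induction generalizing n with
  | base =>
    rw [finAntidiagonal_one, Finset.sum_singleton]
    have hg : gaussBinom q 1 n = 1 := by
      rw [gaussBinom]
      refine Finset.prod_eq_one fun i _ => ?_
      rw [show 1 - 1 + (i + 1) = i + 1 by omega]
      exact div_self (aux_ne hq0 hq1 i)
    rw [hg]
    simp
  | succ r hr ih =>
    rw [sum_finAntidiagonal_succ, gaussBinom_conv hq0 hq1 hr n]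
    refine Finset.sum_congr rfl fun p _ => ?_
    rw [← ih p.2, Finset.mul_sum]
    refine Finset.sum_congr rfl fun x _ => ?_
    rw [Fin.sum_univ_succ]
    simp only [Fin.cons_zero, Fin.cons_succ, Fin.val_zero, Fin.val_succ]
    have es : ∑ j : Fin r, (r + 1 - 1 - ((j : ℕ) + 1)) * x j
        = ∑ j : Fin r, (r - 1 - (j : ℕ)) * x j :=
      Finset.sum_congr rfl fun j _ => by
        rw [show r + 1 - 1 - ((j : ℕ) + 1) = r - 1 - (j : ℕ) by omega]
    rw [show r + 1 - 1 - 0 = r by omega, es, pow_add]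

private lemma summable_pi_geom (hq0 : 0 ≤ q) (hq1 : q < 1) (r : ℕ) :
    Summable (fun m : Fin r → ℕ => ∏ j, q ^ (m j)) := by
  induction r with
  | zero => exact .of_finite
  | succ r ih =>
    have base : Summable (fun p : ℕ × (Fin r → ℕ) => q ^ p.1 * ∏ j, q ^ (p.2 j)) := by
      apply Summable.mul_of_nonneg (f := fun k : ℕ => q ^ k)
        (g := fun m : Fin r → ℕ => ∏ j, q ^ (m j))
      · exact summable_geometric_of_lt_one hq0 hq1
      · exact ih
      · exact fun k => pow_nonneg hq0 k
      · exact fun m => Finset.prod_nonneg fun j _ => pow_nonneg hq0 _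
    rw [← (Fin.consEquiv fun _ : Fin (r + 1) => ℕ).summable_iff]
    refine base.congr fun p => ?_
    simp only [Fin.consEquiv_apply, Function.comp_apply]
    rw [Fin.prod_univ_succ]
    simp [Fin.cons_zero, Fin.cons_succ]

end Aux

theorem stmt8 (r : ℕ) (hr : 1 ≤ r) (h : ℤ) (hh : (r : ℤ) ≤ h)
    (q : ℝ) (hq0 : 0 < q) (hq1 : q < 1) (x : ℝ) (hx : 0 < x) (s : ℂ) :
    Summable (fun m : Fin r → ℕ =>
      (-1 : ℂ) ^ (∑ j, m j) *
        ((q ^ (∑ j : Fin r, (h - ((j : ℤ) + 1) + 1) * (m j : ℤ)) : ℝ) : ℂ) *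
          ((qnum q (((∑ j, m j : ℕ) : ℝ) + x) : ℝ) : ℂ) ^ (-s)) ∧
    (∑' m : Fin r → ℕ,
        (-1 : ℂ) ^ (∑ j, m j) *
          ((q ^ (∑ j : Fin r, (h - ((j : ℤ) + 1) + 1) * (m j : ℤ)) : ℝ) : ℂ) *
            ((qnum q (((∑ j, m j : ℕ) : ℝ) + x) : ℝ) : ℂ) ^ (-s))
      = ∑' m : ℕ,
          ((gaussBinom q r m : ℝ) : ℂ) * (((-(q ^ (h - r + 1 : ℤ))) ^ m : ℝ) : ℂ) *
            ((qnum q ((m : ℝ) + x) : ℝ) : ℂ) ^ (-s) := by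
  have hq1' : (0 : ℝ) < 1 - q := by linarith
  -- positivity and bounds for qnum
  have hqnum_pos : ∀ t : ℝ, 0 < t → 0 < qnum q t := by
    intro t ht
    have h1 : q ^ t < 1 := Real.rpow_lt_one hq0.le hq1 ht
    exact div_pos (by linarith) hq1'
  have hqnum_lb : ∀ n : ℕ, qnum q x ≤ qnum q ((n : ℝ) + x) := by
    intro n
    have hle : q ^ ((n : ℝ) + x) ≤ q ^ x :=
      Real.rpow_le_rpow_of_exponent_ge hq0 hq1.le
        (le_add_of_nonneg_left (Nat.cast_nonneg n))
    rw [qnum, qnum]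
    gcongr
  have hqnum_ub : ∀ n : ℕ, qnum q ((n : ℝ) + x) ≤ 1 / (1 - q) := by
    intro n
    have hpos : 0 < q ^ ((n : ℝ) + x) := Real.rpow_pos_of_pos hq0 _
    rw [qnum]
    gcongr
    linarith
  have hxpos : 0 < qnum q x := hqnum_pos x hx
  set C := max ((qnum q x) ^ (-s.re)) ((1 / (1 - q)) ^ (-s.re)) with hC
  have hFC : ∀ n : ℕ, ‖((qnum q ((n : ℝ) + x) : ℝ) : ℂ) ^ (-s)‖ ≤ C := by
    intro n
    have hpos : 0 < qnum q ((n : ℝ) + x) :=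
      hqnum_pos _ (by positivity)
    rw [Complex.norm_cpow_eq_rpow_re_of_pos hpos, Complex.neg_re]
    rcases le_or_gt 0 (-s.re) with hc | hc
    · exact le_trans (Real.rpow_le_rpow hpos.le (hqnum_ub n) hc) (le_max_right _ _)
    · exact le_trans (Real.rpow_le_rpow_of_nonpos hxpos (hqnum_lb n) hc.le) (le_max_left _ _)
  -- norm bound for the terms
  have hnorm : ∀ m : Fin r → ℕ,
      ‖(-1 : ℂ) ^ (∑ j, m j) *
        ((q ^ (∑ j : Fin r, (h - ((j : ℤ) + 1) + 1) * (m j : ℤ)) : ℝ) : ℂ) *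
          ((qnum q (((∑ j, m j : ℕ) : ℝ) + x) : ℝ) : ℂ) ^ (-s)‖
        ≤ C * ∏ j, q ^ (m j) := by
    intro m
    have hE : ((∑ j, m j : ℕ) : ℤ) ≤ ∑ j : Fin r, (h - ((j : ℤ) + 1) + 1) * (m j : ℤ) := by
      rw [Nat.cast_sum]
      refine Finset.sum_le_sum fun j _ => ?_
      have hj : ((j : ℕ) : ℤ) < (r : ℤ) := by exact_mod_cast j.2
      have h1 : (1 : ℤ) ≤ h - ((j : ℤ) + 1) + 1 := by
        have : ((j : ℤ)) = ((j : ℕ) : ℤ) := rfl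
        omega
      calc (m j : ℤ) = 1 * (m j : ℤ) := (one_mul _).symm
        _ ≤ (h - ((j : ℤ) + 1) + 1) * (m j : ℤ) :=
          mul_le_mul_of_nonneg_right h1 (Int.ofNat_nonneg _)
    have hzp : q ^ (∑ j : Fin r, (h - ((j : ℤ) + 1) + 1) * (m j : ℤ))
        ≤ q ^ ((∑ j, m j : ℕ) : ℤ) :=
      zpow_le_zpow_right_of_le_one₀ hq0 hq1.le hE
    have hzpos : (0 : ℝ) < q ^ (∑ j : Fin r, (h - ((j : ℤ) + 1) + 1) * (m j : ℤ)) :=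
      zpow_pos hq0 _
    rw [norm_mul, norm_mul, norm_pow, norm_neg, norm_one, one_pow, one_mul,
      Complex.norm_real, Real.norm_of_nonneg hzpos.le]
    have hq2 : q ^ ((∑ j, m j : ℕ) : ℤ) = ∏ j, q ^ (m j) := by
      rw [zpow_natCast, ← Finset.prod_pow_eq_pow_sum]
    calc q ^ (∑ j : Fin r, (h - ((j : ℤ) + 1) + 1) * (m j : ℤ)) *
          ‖((qnum q (((∑ j, m j : ℕ) : ℝ) + x) : ℝ) : ℂ) ^ (-s)‖
        ≤ (∏ j, q ^ (m j)) * C := by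
          refine mul_le_mul (hq2 ▸ hzp) (hFC _) (norm_nonneg _) ?_
          exact Finset.prod_nonneg fun j _ => pow_nonneg hq0.le _
      _ = C * ∏ j, q ^ (m j) := mul_comm _ _
  have hsum : Summable (fun m : Fin r → ℕ =>
      (-1 : ℂ) ^ (∑ j, m j) *
        ((q ^ (∑ j : Fin r, (h - ((j : ℤ) + 1) + 1) * (m j : ℤ)) : ℝ) : ℂ) *
          ((qnum q (((∑ j, m j : ℕ) : ℝ) + x) : ℝ) : ℂ) ^ (-s)) :=
    Summable.of_norm_bounded ((summable_pi_geom hq0.le hq1 r).mul_left C) hnorm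
  refine ⟨hsum, ?_⟩
  -- fiberwise summation over σ = sum of coordinates
  have hfib := hsum.hasSum.tsum_fiberwise (fun m : Fin r → ℕ => ∑ j, m j)
  rw [← hfib.tsum_eq]
  refine tsum_congr fun n => ?_
  have hset : (fun m : Fin r → ℕ => ∑ j, m j) ⁻¹' {n} = ↑(Finset.finAntidiagonal r n) := by
    ext m
    simp [Finset.mem_finAntidiagonal]
  rw [hset, Finset.tsum_subtype' (Finset.finAntidiagonal r n)
    (fun m : Fin r → ℕ =>
      (-1 : ℂ) ^ (∑ j, m j) *
        ((q ^ (∑ j : Fin r, (h - ((j : ℤ) + 1) + 1) * (m j : ℤ)) : ℝ) : ℂ) *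
          ((qnum q (((∑ j, m j : ℕ) : ℝ) + x) : ℝ) : ℂ) ^ (-s))]
  -- now a finite sum over the antidiagonal
  have hterm : ∀ m ∈ Finset.finAntidiagonal r n,
      (-1 : ℂ) ^ (∑ j, m j) *
        ((q ^ (∑ j : Fin r, (h - ((j : ℤ) + 1) + 1) * (m j : ℤ)) : ℝ) : ℂ) *
          ((qnum q (((∑ j, m j : ℕ) : ℝ) + x) : ℝ) : ℂ) ^ (-s)
      = ((((-(q ^ (h - r + 1 : ℤ))) ^ n : ℝ)) : ℂ) *
          ((qnum q ((n : ℝ) + x) : ℝ) : ℂ) ^ (-s) *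
          ((q ^ (∑ j : Fin r, (r - 1 - (j : ℕ)) * m j) : ℝ) : ℂ) := by
    intro m hm
    rw [Finset.mem_finAntidiagonal] at hm
    have hEeq : (∑ j : Fin r, (h - ((j : ℤ) + 1) + 1) * (m j : ℤ))
        = (h - r + 1) * (n : ℤ) + ((∑ j : Fin r, (r - 1 - (j : ℕ)) * m j : ℕ) : ℤ) := by
      rw [← hm]
      push_cast
      rw [Finset.mul_sum, ← Finset.sum_add_distrib]
      refine Finset.sum_congr rfl fun j _ => ?_
      have hj : ((j : ℕ) : ℤ) < (r : ℤ) := by exact_mod_cast j.2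
      have hcast : (((r - 1 - (j : ℕ)) : ℕ) : ℤ) = (r : ℤ) - 1 - ((j : ℕ) : ℤ) := by omega
      rw [hcast]
      have : ((j : ℤ)) = ((j : ℕ) : ℤ) := rfl
      rw [this]
      ring
    rw [hm, hEeq, zpow_add₀ (ne_of_gt hq0), zpow_natCast]
    have hzm : q ^ ((h - r + 1) * (n : ℤ)) = (q ^ (h - r + 1 : ℤ)) ^ n := by
      rw [zpow_mul, zpow_natCast]
    rw [hzm]
    push_cast
    ring
  rw [Finset.sum_congr rfl hterm, ← Finset.mul_sum]
  have hKC : ∑ m ∈ Finset.finAntidiagonal r n,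
      ((q ^ (∑ j : Fin r, (r - 1 - (j : ℕ)) * m j) : ℝ) : ℂ)
      = ((gaussBinom q r n : ℝ) : ℂ) := by
    rw [← Complex.ofReal_sum]
    exact congrArg Complex.ofReal (keyComb hq0 hq1 hr n)
  rw [hKC]
  ring
end

section
/- Let f be an odd positive integer, let χ be a Dirichlet character modulo f with values in ℂ (extended to ℕ by χ(m) := χ(m mod f)), let r ≥ 1 be an integer, let h be an integer with h ≥ r, let q be a real number with 0 < q < 1, let x > 0 be real, and let s ∈ ℂ. Then [2]_q^r · Σ_{(m_1,…,m_r) ∈ ℕ^r} (-1)^{m_1+⋯+m_r} q^{Σ_{j=1}^r (h-j+1) m_j} (∏_{j=1}^r χ(m_j)) [m_1+⋯+m_r+x]_q^{-s} = ([2]_q^r/[2]_{q^f}^r) · [f]_q^{-s} · Σ_{(a_1,…,a_r) ∈ {0,…,f-1}^r} (-1)^{a_1+⋯+a_r} (∏_{j=1}^r χ(a_j)) q^{Σ_{j=1}^r (h-j+1) a_j} · ( [2]_{q^f}^r · Σ_{(k_1,…,k_r) ∈ ℕ^r} (-1)^{k_1+⋯+k_r} (q^f)^{Σ_{j=1}^r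 (h-j+1) k_j} [k_1+⋯+k_r+(x+a_1+⋯+a_r)/f]_{q^f}^{-s} ), where for a positive real t, t^{-s} := exp(-s·log t), and all series converge absolutely. -/
lemma qnum_pos {q y : ℝ} (hq0 : 0 < q) (hq1 : q < 1) (hy : 0 < y) : 0 < qnum q y :=
  div_pos (by have := Real.rpow_lt_one hq0.le hq1 hy; linarith) (by linarith)

lemma qnum_le {q y : ℝ} (hq0 : 0 < q) (hq1 : q < 1) : qnum q y ≤ 1 / (1 - q) := by
  unfold qnum
  gcongr
  · have := Real.rpow_nonneg hq0.le y; linarith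

lemma qnum_mono {q : ℝ} (hq0 : 0 < q) (hq1 : q < 1) {y y' : ℝ} (hyy : y ≤ y') :
    qnum q y ≤ qnum q y' := by
  unfold qnum
  rw [div_eq_mul_inv, div_eq_mul_inv]
  have hnum : (1 : ℝ) - q ^ y ≤ 1 - q ^ y' := by
    have := Real.rpow_le_rpow_of_exponent_ge hq0 hq1.le hyy; linarith
  exact mul_le_mul_of_nonneg_right hnum (inv_nonneg.2 (by linarith))

lemma rpow_bound {lo hi Z t : ℝ} (hlo : 0 < lo) (h1 : lo ≤ Z) (h2 : Z ≤ hi) :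
    Z ^ t ≤ Real.exp (|t| * (|Real.log lo| + |Real.log hi|)) := by
  have hZ : 0 < Z := lt_of_lt_of_le hlo h1
  rw [Real.rpow_def_of_pos hZ]
  apply Real.exp_le_exp.2
  have h3 : Real.log lo ≤ Real.log Z := Real.log_le_log hlo h1
  have h4 : Real.log Z ≤ Real.log hi := Real.log_le_log hZ h2
  have hlog : |Real.log Z| ≤ |Real.log lo| + |Real.log hi| := by
    rw [abs_le]
    constructor
    · have := neg_abs_le (Real.log lo)
      have := abs_nonneg (Real.log hi)
      linarith
    · have := le_abs_self (Real.log hi)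
      have := abs_nonneg (Real.log lo)
      linarith
  calc Real.log Z * t ≤ |Real.log Z * t| := le_abs_self _
    _ = |t| * |Real.log Z| := by rw [abs_mul, mul_comm]
    _ ≤ |t| * (|Real.log lo| + |Real.log hi|) :=
        mul_le_mul_of_nonneg_left hlog (abs_nonneg t)

lemma summable_pi_pow (r : ℕ) {Q : ℝ} (hQ0 : 0 ≤ Q) (hQ1 : Q < 1) :
    Summable (fun m : Fin r → ℕ => ∏ j, Q ^ (m j)) := by
  induction r with
  | zero => exact Summable.of_finite
  | succ n ih =>
    have hg := summable_geometric_of_lt_one hQ0 hQ1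
    have h1 : (0 : ℕ → ℝ) ≤ fun k : ℕ => Q ^ k := fun k => pow_nonneg hQ0 k
    have h2 : (0 : (Fin n → ℕ) → ℝ) ≤ fun m : Fin n → ℕ => ∏ j, Q ^ (m j) :=
      fun m => Finset.prod_nonneg fun j _ => pow_nonneg hQ0 _
    have hmul : Summable (fun p : ℕ × (Fin n → ℕ) => Q ^ p.1 * ∏ j, Q ^ (p.2 j)) :=
      Summable.mul_of_nonneg (f := fun k : ℕ => Q ^ k)
        (g := fun m : Fin n → ℕ => ∏ j, Q ^ (m j)) hg ih h1 h2
    have hcomp : Summable ((fun m : Fin (n + 1) → ℕ => ∏ j, Q ^ (m j)) ∘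
        (Fin.consEquiv (fun _ : Fin (n + 1) => ℕ))) := by
      apply hmul.congr
      intro p
      simp [Fin.prod_univ_succ, Function.comp]
    exact (Fin.consEquiv (fun _ : Fin (n + 1) => ℕ)).summable_iff.mp hcomp

lemma summable_master (r : ℕ) {Q : ℝ} (hQ0 : 0 < Q) (hQ1 : Q < 1) (c : Fin r → ℤ)
    (hc : ∀ j, 1 ≤ c j) {y : ℝ} (hy : 0 < y) (w : (Fin r → ℕ) → ℂ)
    (hw : ∀ m, ‖w m‖ ≤ 1) (s : ℂ) :
    Summable (fun m : Fin r → ℕ =>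
      (-1 : ℂ) ^ (∑ j, m j) * ((Q ^ (∑ j, c j * (m j : ℤ)) : ℝ) : ℂ) * w m *
        ((qnum Q (((∑ j, m j : ℕ) : ℝ) + y) : ℝ) : ℂ) ^ (-s)) := by
  set C : ℝ :=
    Real.exp (|(-s).re| * (|Real.log (qnum Q y)| + |Real.log (1 / (1 - Q))|)) with hCdef
  apply Summable.of_norm_bounded (g := fun m : Fin r → ℕ => C * ∏ j, Q ^ (m j))
    ((summable_pi_pow r hQ0.le hQ1).mul_left C)
  intro m
  have hym : (0 : ℝ) < ((∑ j, m j : ℕ) : ℝ) + y := by positivity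
  have hZ : 0 < qnum Q (((∑ j, m j : ℕ) : ℝ) + y) := qnum_pos hQ0 hQ1 hym
  have h1 : ‖((-1 : ℂ)) ^ (∑ j, m j)‖ = 1 := by simp
  have h2 : ‖((Q ^ (∑ j, c j * (m j : ℤ)) : ℝ) : ℂ)‖ = Q ^ (∑ j, c j * (m j : ℤ)) := by
    rw [Complex.norm_real, Real.norm_eq_abs]
    exact abs_of_pos (zpow_pos hQ0 _)
  have h3 : ‖((qnum Q (((∑ j, m j : ℕ) : ℝ) + y) : ℝ) : ℂ) ^ (-s)‖
      = qnum Q (((∑ j, m j : ℕ) : ℝ) + y) ^ (-s).re := by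
    rw [Complex.norm_cpow_eq_rpow_re_of_pos hZ]
  rw [norm_mul, norm_mul, norm_mul, h1, h2, h3, one_mul]
  have hE : Q ^ (∑ j, c j * (m j : ℤ)) ≤ ∏ j, Q ^ (m j) := by
    have hle : ((∑ j, m j : ℕ) : ℤ) ≤ ∑ j, c j * (m j : ℤ) := by
      push_cast
      apply Finset.sum_le_sum
      intro j _
      nlinarith [hc j, (Nat.cast_nonneg (m j) : (0 : ℤ) ≤ (m j : ℤ))]
    calc Q ^ (∑ j, c j * (m j : ℤ)) ≤ Q ^ ((∑ j, m j : ℕ) : ℤ) :=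
        zpow_le_zpow_right_of_le_one₀ hQ0 hQ1.le hle
      _ = ∏ j, Q ^ (m j) := by
        rw [zpow_natCast, ← Finset.prod_pow_eq_pow_sum]
  have hZb : qnum Q (((∑ j, m j : ℕ) : ℝ) + y) ^ (-s).re ≤ C :=
    rpow_bound (qnum_pos hQ0 hQ1 hy)
      (qnum_mono hQ0 hQ1 (le_add_of_nonneg_left (Nat.cast_nonneg _))) (qnum_le hQ0 hQ1)
  have h0' : (0 : ℝ) ≤ ∏ j, Q ^ (m j) :=
    Finset.prod_nonneg fun j _ => pow_nonneg hQ0.le _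
  have h0'' : (0 : ℝ) ≤ qnum Q (((∑ j, m j : ℕ) : ℝ) + y) ^ (-s).re :=
    Real.rpow_nonneg hZ.le _
  have step1 : (Q ^ (∑ j, c j * (m j : ℤ))) * ‖w m‖ ≤ ∏ j, Q ^ (m j) := by
    simpa using mul_le_mul hE (hw m) (norm_nonneg _) h0'
  calc (Q ^ (∑ j, c j * (m j : ℤ))) * ‖w m‖ * qnum Q (((∑ j, m j : ℕ) : ℝ) + y) ^ (-s).re
      ≤ (∏ j, Q ^ (m j)) * C := mul_le_mul step1 hZb h0'' h0'
    _ = C * ∏ j, Q ^ (m j) := mul_comm _ _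

lemma qnum_mul_split {q : ℝ} (hq0 : 0 < q) (hq1 : q < 1) {f : ℕ} (hf0 : 0 < f) (y : ℝ) :
    qnum q ((f : ℝ) * y) = qnum q (f : ℝ) * qnum (q ^ f) y := by
  unfold qnum
  have h1 : q ^ ((f : ℝ) * y) = (q ^ f) ^ y := by
    rw [Real.rpow_mul hq0.le, Real.rpow_natCast]
  have h2 : q ^ ((f : ℝ)) = q ^ f := Real.rpow_natCast q f
  have hqf1 : q ^ f < 1 := pow_lt_one₀ hq0.le hq1 hf0.ne'
  have hne : 1 - q ^ f ≠ 0 := by linarith [hqf1]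
  have hne2 : 1 - q ≠ 0 := by linarith
  rw [h1, h2]
  field_simp

lemma key_lemma (f : ℕ) (hf0 : 0 < f) (hf : Odd f) (χ : DirichletCharacter ℂ f)
    (r : ℕ) (h : ℤ) (q : ℝ) (hq0 : 0 < q) (hq1 : q < 1) (x : ℝ) (hx : 0 < x) (s : ℂ)
    (a : Fin r → Fin f) (k : Fin r → ℕ) :
    (-1 : ℂ) ^ (∑ j, ((a j : ℕ) + f * k j)) *
      ((q ^ (∑ j : Fin r, (h - ((j : ℤ) + 1) + 1) * (((a j : ℕ) + f * k j : ℕ) : ℤ)) : ℝ) : ℂ) *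
        (∏ j, χ ((((a j : ℕ) + f * k j : ℕ)) : ZMod f)) *
          ((qnum q (((∑ j, ((a j : ℕ) + f * k j) : ℕ) : ℝ) + x) : ℝ) : ℂ) ^ (-s)
    = ((-1 : ℂ) ^ (∑ j, (a j : ℕ)) *
        ((q ^ (∑ j : Fin r, (h - ((j : ℤ) + 1) + 1) * ((a j : ℕ) : ℤ)) : ℝ) : ℂ) *
          ∏ j, χ (((a j : ℕ)) : ZMod f)) *
      ((qnum q (f : ℝ) : ℝ) : ℂ) ^ (-s) *
        ((-1 : ℂ) ^ (∑ j, k j) *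
          (((q ^ f) ^ (∑ j : Fin r, (h - ((j : ℤ) + 1) + 1) * (k j : ℤ)) : ℝ) : ℂ) *
            ((qnum (q ^ f) (((∑ j, k j : ℕ) : ℝ) + (x + ∑ j, ((a j : ℕ) : ℝ)) / f) : ℝ) : ℂ)
              ^ (-s)) := by
  have hfR : (0 : ℝ) < f := Nat.cast_pos.2 hf0
  have hsum : (∑ j, ((a j : ℕ) + f * k j)) = (∑ j, (a j : ℕ)) + f * ∑ j, k j := by
    rw [Finset.sum_add_distrib, Finset.mul_sum]
  have hsign : (-1 : ℂ) ^ (∑ j, ((a j : ℕ) + f * k j))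
      = (-1 : ℂ) ^ (∑ j, (a j : ℕ)) * (-1 : ℂ) ^ (∑ j, k j) := by
    rw [hsum, pow_add, pow_mul, hf.neg_one_pow]
  have hexp : (∑ j : Fin r, (h - ((j : ℤ) + 1) + 1) * (((a j : ℕ) + f * k j : ℕ) : ℤ))
      = (∑ j : Fin r, (h - ((j : ℤ) + 1) + 1) * ((a j : ℕ) : ℤ))
        + (f : ℤ) * ∑ j : Fin r, (h - ((j : ℤ) + 1) + 1) * ((k j : ℕ) : ℤ) := by
    rw [Finset.mul_sum, ← Finset.sum_add_distrib]
    apply Finset.sum_congr rfl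
    intro j _
    push_cast
    ring
  have hzpow : q ^ (∑ j : Fin r, (h - ((j : ℤ) + 1) + 1) * (((a j : ℕ) + f * k j : ℕ) : ℤ))
      = q ^ (∑ j : Fin r, (h - ((j : ℤ) + 1) + 1) * ((a j : ℕ) : ℤ))
        * (q ^ f) ^ (∑ j : Fin r, (h - ((j : ℤ) + 1) + 1) * ((k j : ℕ) : ℤ)) := by
    rw [hexp, zpow_add₀ hq0.ne', zpow_mul, zpow_natCast]
  have hχ : ∏ j, χ ((((a j : ℕ) + f * k j : ℕ)) : ZMod f)
      = ∏ j, χ (((a j : ℕ)) : ZMod f) := by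
    apply Finset.prod_congr rfl
    intro j _
    congr 1
    push_cast
    simp
  have harg : ((∑ j, ((a j : ℕ) + f * k j) : ℕ) : ℝ) + x
      = (f : ℝ) * (((∑ j, k j : ℕ) : ℝ) + (x + ∑ j, ((a j : ℕ) : ℝ)) / f) := by
    rw [hsum]
    push_cast
    field_simp
    ring
  have hy : (0 : ℝ) < ((∑ j, k j : ℕ) : ℝ) + (x + ∑ j, ((a j : ℕ) : ℝ)) / f := by
    have h1 : (0 : ℝ) ≤ ((∑ j, k j : ℕ) : ℝ) := Nat.cast_nonneg _
    have h2 : (0 : ℝ) ≤ ∑ j, ((a j : ℕ) : ℝ) :=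
      Finset.sum_nonneg fun j _ => Nat.cast_nonneg _
    have : (0 : ℝ) < (x + ∑ j, ((a j : ℕ) : ℝ)) / f := div_pos (by linarith) hfR
    linarith
  have hQpos : 0 < qnum q (f : ℝ) := qnum_pos hq0 hq1 hfR
  have hZpos : 0 < qnum (q ^ f) (((∑ j, k j : ℕ) : ℝ) + (x + ∑ j, ((a j : ℕ) : ℝ)) / f) :=
    qnum_pos (pow_pos hq0 f) (pow_lt_one₀ hq0.le hq1 hf0.ne') hy
  have hcpow : ((qnum q (((∑ j, ((a j : ℕ) + f * k j) : ℕ) : ℝ) + x) : ℝ) : ℂ) ^ (-s)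
      = ((qnum q (f : ℝ) : ℝ) : ℂ) ^ (-s) *
        ((qnum (q ^ f) (((∑ j, k j : ℕ) : ℝ) + (x + ∑ j, ((a j : ℕ) : ℝ)) / f) : ℝ) : ℂ)
          ^ (-s) := by
    rw [harg, qnum_mul_split hq0 hq1 hf0, Complex.ofReal_mul, Complex.mul_cpow_ofReal_nonneg hQpos.le hZpos.le]
  rw [hsign, hχ, hcpow, hzpow, Complex.ofReal_mul]
  ring

def splitE (f r : ℕ) (hf0 : 0 < f) : (Fin r → Fin f) × (Fin r → ℕ) ≃ (Fin r → ℕ) where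
  toFun p := fun j => (p.1 j : ℕ) + f * p.2 j
  invFun m := (fun j => ⟨m j % f, Nat.mod_lt _ hf0⟩, fun j => m j / f)
  left_inv p := by
    rcases p with ⟨a, k⟩
    simp only [Prod.mk.injEq]
    constructor
    · funext j
      apply Fin.ext
      show ((a j : ℕ) + f * k j) % f = (a j : ℕ)
      rw [Nat.add_mul_mod_self_left, Nat.mod_eq_of_lt (a j).isLt]
    · funext j
      show ((a j : ℕ) + f * k j) / f = k j
      rw [Nat.add_mul_div_left _ _ hf0, Nat.div_eq_of_lt (a j).isLt, zero_add]
  right_inv m := by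
    funext j
    show m j % f + f * (m j / f) = m j
    exact Nat.mod_add_div (m j) f

set_option maxHeartbeats 2000000 in
theorem stmt10 (f : ℕ) (hf0 : 0 < f) (hf : Odd f) (χ : DirichletCharacter ℂ f)
    (r : ℕ) (hr : 1 ≤ r) (h : ℤ) (hh : (r : ℤ) ≤ h)
    (q : ℝ) (hq0 : 0 < q) (hq1 : q < 1) (x : ℝ) (hx : 0 < x) (s : ℂ) :
    Summable (fun m : Fin r → ℕ =>
      (-1 : ℂ) ^ (∑ j, m j) *
        ((q ^ (∑ j : Fin r, (h - ((j : ℤ) + 1) + 1) * (m j : ℤ)) : ℝ) : ℂ) *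
          (∏ j, χ ((m j : ℕ) : ZMod f)) *
            ((qnum q (((∑ j, m j : ℕ) : ℝ) + x) : ℝ) : ℂ) ^ (-s)) ∧
    (∀ a : Fin r → Fin f, Summable (fun k : Fin r → ℕ =>
      (-1 : ℂ) ^ (∑ j, k j) *
        (((q ^ f) ^ (∑ j : Fin r, (h - ((j : ℤ) + 1) + 1) * (k j : ℤ)) : ℝ) : ℂ) *
          ((qnum (q ^ f) (((∑ j, k j : ℕ) : ℝ) + (x + ∑ j, ((a j : ℕ) : ℝ)) / f) : ℝ) : ℂ)
            ^ (-s))) ∧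
    (1 + (q : ℂ)) ^ r * (∑' m : Fin r → ℕ,
        (-1 : ℂ) ^ (∑ j, m j) *
          ((q ^ (∑ j : Fin r, (h - ((j : ℤ) + 1) + 1) * (m j : ℤ)) : ℝ) : ℂ) *
            (∏ j, χ ((m j : ℕ) : ZMod f)) *
              ((qnum q (((∑ j, m j : ℕ) : ℝ) + x) : ℝ) : ℂ) ^ (-s))
      = ((1 + (q : ℂ)) ^ r / (1 + (q : ℂ) ^ f) ^ r) *
          ((qnum q (f : ℝ) : ℝ) : ℂ) ^ (-s) *
          ∑ a : Fin r → Fin f,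
            (-1 : ℂ) ^ (∑ j, (a j : ℕ)) * (∏ j, χ (((a j : ℕ) : ℕ) : ZMod f)) *
              ((q ^ (∑ j : Fin r, (h - ((j : ℤ) + 1) + 1) * ((a j : ℕ) : ℤ)) : ℝ) : ℂ) *
                ((1 + (q : ℂ) ^ f) ^ r * ∑' k : Fin r → ℕ,
                  (-1 : ℂ) ^ (∑ j, k j) *
                    (((q ^ f) ^ (∑ j : Fin r, (h - ((j : ℤ) + 1) + 1) * (k j : ℤ)) : ℝ) : ℂ) *
                      ((qnum (q ^ f)
                        (((∑ j, k j : ℕ) : ℝ) + (x + ∑ j, ((a j : ℕ) : ℝ)) / f) : ℝ) : ℂ)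
                        ^ (-s)) := by
  have hfR : (0 : ℝ) < f := Nat.cast_pos.2 hf0
  have hc : ∀ j : Fin r, 1 ≤ h - ((j : ℤ) + 1) + 1 := by
    intro j
    have h1 : ((j : ℕ) : ℤ) < (r : ℤ) := by exact_mod_cast j.isLt
    omega
  have hw1 : ∀ m : Fin r → ℕ, ‖∏ j, χ ((m j : ℕ) : ZMod f)‖ ≤ 1 := by
    intro m
    calc ‖∏ j, χ ((m j : ℕ) : ZMod f)‖ = ∏ j, ‖χ ((m j : ℕ) : ZMod f)‖ := norm_prod _ _
      _ ≤ 1 := Finset.prod_le_one (fun j _ => norm_nonneg _)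
            (fun j _ => DirichletCharacter.norm_le_one χ _)
  have S1 : Summable (fun m : Fin r → ℕ =>
      (-1 : ℂ) ^ (∑ j, m j) *
        ((q ^ (∑ j : Fin r, (h - ((j : ℤ) + 1) + 1) * (m j : ℤ)) : ℝ) : ℂ) *
          (∏ j, χ ((m j : ℕ) : ZMod f)) *
            ((qnum q (((∑ j, m j : ℕ) : ℝ) + x) : ℝ) : ℂ) ^ (-s)) :=
    summable_master r hq0 hq1 (fun j => h - ((j : ℤ) + 1) + 1) hc hx
      (fun m => ∏ j, χ ((m j : ℕ) : ZMod f)) hw1 s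
  have hQ0 : 0 < q ^ f := pow_pos hq0 f
  have hQ1 : q ^ f < 1 := pow_lt_one₀ hq0.le hq1 hf0.ne'
  have hya : ∀ a : Fin r → Fin f, 0 < (x + ∑ j, ((a j : ℕ) : ℝ)) / f := by
    intro a
    have h2 : (0 : ℝ) ≤ ∑ j, ((a j : ℕ) : ℝ) :=
      Finset.sum_nonneg fun j _ => Nat.cast_nonneg _
    exact div_pos (by linarith) hfR
  have hS2 : ∀ a : Fin r → Fin f, Summable (fun k : Fin r → ℕ =>
      (-1 : ℂ) ^ (∑ j, k j) *
        (((q ^ f) ^ (∑ j : Fin r, (h - ((j : ℤ) + 1) + 1) * (k j : ℤ)) : ℝ) : ℂ) *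
          ((qnum (q ^ f) (((∑ j, k j : ℕ) : ℝ) + (x + ∑ j, ((a j : ℕ) : ℝ)) / f) : ℝ) : ℂ)
            ^ (-s)) := by
    intro a
    have := summable_master r hQ0 hQ1 (fun j => h - ((j : ℤ) + 1) + 1) hc (hya a)
      (fun _ => (1 : ℂ)) (fun _ => by norm_num) s
    exact this.congr (fun k => by ring)
  refine ⟨S1, hS2, ?_⟩
  have hinner : ∀ a : Fin r → Fin f,
      (∑' k : Fin r → ℕ,
        (-1 : ℂ) ^ (∑ j, ((a j : ℕ) + f * k j)) *
          ((q ^ (∑ j : Fin r, (h - ((j : ℤ) + 1) + 1) * (((a j : ℕ) + f * k j : ℕ) : ℤ)) : ℝ) : ℂ) *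
            (∏ j, χ ((((a j : ℕ) + f * k j : ℕ)) : ZMod f)) *
              ((qnum q (((∑ j, ((a j : ℕ) + f * k j) : ℕ) : ℝ) + x) : ℝ) : ℂ) ^ (-s))
      = ((-1 : ℂ) ^ (∑ j, (a j : ℕ)) *
          ((q ^ (∑ j : Fin r, (h - ((j : ℤ) + 1) + 1) * ((a j : ℕ) : ℤ)) : ℝ) : ℂ) *
            ∏ j, χ (((a j : ℕ)) : ZMod f)) *
        ((qnum q (f : ℝ) : ℝ) : ℂ) ^ (-s) *
          ∑' k : Fin r → ℕ,
            (-1 : ℂ) ^ (∑ j, k j) *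
              (((q ^ f) ^ (∑ j : Fin r, (h - ((j : ℤ) + 1) + 1) * (k j : ℤ)) : ℝ) : ℂ) *
                ((qnum (q ^ f) (((∑ j, k j : ℕ) : ℝ) + (x + ∑ j, ((a j : ℕ) : ℝ)) / f) : ℝ) : ℂ)
                  ^ (-s) := by
    intro a
    rw [tsum_congr (fun k => key_lemma f hf0 hf χ r h q hq0 hq1 x hx s a k)]
    exact tsum_mul_left
  have hsumP : Summable (fun p : (Fin r → Fin f) × (Fin r → ℕ) =>
      (-1 : ℂ) ^ (∑ j, ((p.1 j : ℕ) + f * p.2 j)) *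
        ((q ^ (∑ j : Fin r, (h - ((j : ℤ) + 1) + 1) * (((p.1 j : ℕ) + f * p.2 j : ℕ) : ℤ)) : ℝ) : ℂ) *
          (∏ j, χ ((((p.1 j : ℕ) + f * p.2 j : ℕ)) : ZMod f)) *
            ((qnum q (((∑ j, ((p.1 j : ℕ) + f * p.2 j) : ℕ) : ℝ) + x) : ℝ) : ℂ) ^ (-s)) :=
    (splitE f r hf0).summable_iff.2 S1
  have hsumA : ∀ a : Fin r → Fin f, Summable (fun k : Fin r → ℕ =>
      (-1 : ℂ) ^ (∑ j, ((a j : ℕ) + f * k j)) *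
        ((q ^ (∑ j : Fin r, (h - ((j : ℤ) + 1) + 1) * (((a j : ℕ) + f * k j : ℕ) : ℤ)) : ℝ) : ℂ) *
          (∏ j, χ ((((a j : ℕ) + f * k j : ℕ)) : ZMod f)) *
            ((qnum q (((∑ j, ((a j : ℕ) + f * k j) : ℕ) : ℝ) + x) : ℝ) : ℂ) ^ (-s)) := by
    intro a
    refine (Summable.mul_left ((-1 : ℂ) ^ (∑ j, (a j : ℕ)) *
        ((q ^ (∑ j : Fin r, (h - ((j : ℤ) + 1) + 1) * ((a j : ℕ) : ℤ)) : ℝ) : ℂ) *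
          (∏ j, χ (((a j : ℕ)) : ZMod f)) * ((qnum q (f : ℝ) : ℝ) : ℂ) ^ (-s)) (hS2 a)).congr
      (fun k => (key_lemma f hf0 hf χ r h q hq0 hq1 x hx s a k).symm)
  have hstep : (∑' m : Fin r → ℕ,
      (-1 : ℂ) ^ (∑ j, m j) *
        ((q ^ (∑ j : Fin r, (h - ((j : ℤ) + 1) + 1) * (m j : ℤ)) : ℝ) : ℂ) *
          (∏ j, χ ((m j : ℕ) : ZMod f)) *
            ((qnum q (((∑ j, m j : ℕ) : ℝ) + x) : ℝ) : ℂ) ^ (-s))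
      = ∑ a : Fin r → Fin f,
        (((-1 : ℂ) ^ (∑ j, (a j : ℕ)) *
          ((q ^ (∑ j : Fin r, (h - ((j : ℤ) + 1) + 1) * ((a j : ℕ) : ℤ)) : ℝ) : ℂ) *
            ∏ j, χ (((a j : ℕ)) : ZMod f)) *
        ((qnum q (f : ℝ) : ℝ) : ℂ) ^ (-s) *
          ∑' k : Fin r → ℕ,
            (-1 : ℂ) ^ (∑ j, k j) *
              (((q ^ f) ^ (∑ j : Fin r, (h - ((j : ℤ) + 1) + 1) * (k j : ℤ)) : ℝ) : ℂ) *
                ((qnum (q ^ f) (((∑ j, k j : ℕ) : ℝ) + (x + ∑ j, ((a j : ℕ) : ℝ)) / f) : ℝ) : ℂ)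
                  ^ (-s)) := by
    calc (∑' m : Fin r → ℕ,
        (-1 : ℂ) ^ (∑ j, m j) *
          ((q ^ (∑ j : Fin r, (h - ((j : ℤ) + 1) + 1) * (m j : ℤ)) : ℝ) : ℂ) *
            (∏ j, χ ((m j : ℕ) : ZMod f)) *
              ((qnum q (((∑ j, m j : ℕ) : ℝ) + x) : ℝ) : ℂ) ^ (-s))
        = ∑' p : (Fin r → Fin f) × (Fin r → ℕ),
            (-1 : ℂ) ^ (∑ j, ((p.1 j : ℕ) + f * p.2 j)) *
              ((q ^ (∑ j : Fin r, (h - ((j : ℤ) + 1) + 1) * (((p.1 j : ℕ) + f * p.2 j : ℕ) : ℤ)) : ℝ) : ℂ) *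
                (∏ j, χ ((((p.1 j : ℕ) + f * p.2 j : ℕ)) : ZMod f)) *
                  ((qnum q (((∑ j, ((p.1 j : ℕ) + f * p.2 j) : ℕ) : ℝ) + x) : ℝ) : ℂ) ^ (-s) :=
          (Equiv.tsum_eq (splitE f r hf0) _).symm
      _ = ∑' (a : Fin r → Fin f), ∑' (k : Fin r → ℕ),
            (-1 : ℂ) ^ (∑ j, ((a j : ℕ) + f * k j)) *
              ((q ^ (∑ j : Fin r, (h - ((j : ℤ) + 1) + 1) * (((a j : ℕ) + f * k j : ℕ) : ℤ)) : ℝ) : ℂ) *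
                (∏ j, χ ((((a j : ℕ) + f * k j : ℕ)) : ZMod f)) *
                  ((qnum q (((∑ j, ((a j : ℕ) + f * k j) : ℕ) : ℝ) + x) : ℝ) : ℂ) ^ (-s) :=
          Summable.tsum_prod' hsumP hsumA
      _ = ∑ a : Fin r → Fin f, ∑' (k : Fin r → ℕ),
            (-1 : ℂ) ^ (∑ j, ((a j : ℕ) + f * k j)) *
              ((q ^ (∑ j : Fin r, (h - ((j : ℤ) + 1) + 1) * (((a j : ℕ) + f * k j : ℕ) : ℤ)) : ℝ) : ℂ) *
                (∏ j, χ ((((a j : ℕ) + f * k j : ℕ)) : ZMod f)) *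
                  ((qnum q (((∑ j, ((a j : ℕ) + f * k j) : ℕ) : ℝ) + x) : ℝ) : ℂ) ^ (-s) :=
          tsum_fintype _
      _ = _ := Finset.sum_congr rfl (fun a _ => hinner a)
  rw [hstep, Finset.mul_sum, Finset.mul_sum]
  refine Finset.sum_congr rfl (fun a _ => ?_)
  have hne : ((1 : ℂ) + (q : ℂ) ^ f) ≠ 0 := by
    intro hcon
    have hcon' : ((1 + q ^ f : ℝ) : ℂ) = 0 := by push_cast; exact hcon
    have hzero : (1 + q ^ f : ℝ) = 0 := by exact_mod_cast hcon'
    linarith [pow_pos hq0 f]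
  have hne' : ((1 : ℂ) + (q : ℂ) ^ f) ^ r ≠ 0 := pow_ne_zero _ hne
  set T := ∑' k : Fin r → ℕ,
                  (-1 : ℂ) ^ (∑ j, k j) *
                    (((q ^ f) ^ (∑ j : Fin r, (h - ((j : ℤ) + 1) + 1) * (k j : ℤ)) : ℝ) : ℂ) *
                      ((qnum (q ^ f)
                        (((∑ j, k j : ℕ) : ℝ) + (x + ∑ j, ((a j : ℕ) : ℝ)) / f) : ℝ) : ℂ)
                        ^ (-s) with hT
  field_simp
end
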